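/- Let L be a finite-dimensional non-abelian left Leibniz algebra and A an abelian subalgebra of codimension k > 1 which is a maximal (proper) subalgebra of L. Then there exists a subspace L₁ ⊊ L such that L = A ⊕ L₁ (direct sum of vector spaces) and [A, L₁] = L₁. -/

import Mathlib

open LieModule

/-- The span of all products `[a,b]` with `a ∈ A`, `b ∈ B`. -/
def brSpan {F L : Type*} [Field F] [AddCommGroup L] [Module F L]
    (br : L →ₗ[F] L →ₗ[F] L) (A B : Submodule F L) : Submodule F L :=
  Submodule.span F {z | ∃ a ∈ A, ∃ b ∈ B, z = br a b}

/-- Iterated application of a derivation to a product lands in the span of products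
of iterates. -/
private lemma deriv_pow_mem {F L : Type*} [Field F] [AddCommGroup L] [Module F L]
    (br : L →ₗ[F] L →ₗ[F] L) (D : Module.End F L)
    (hD : ∀ u v : L, D (br u v) = br (D u) v + br u (D v)) (x y : L) :
    ∀ n : ℕ, (D ^ n) (br x y) ∈
      Submodule.span F {z | ∃ i j : ℕ, i + j = n ∧ z = br ((D ^ i) x) ((D ^ j) y)} := by
  intro n
  induction n with
  | zero => exact Submodule.subset_span ⟨0, 0, rfl, by simp⟩
  | succ n ih =>
    have hstep : ∀ z ∈ Submodule.span F
        {z | ∃ i j : ℕ, i + j = n ∧ z = br ((D ^ i) x) ((D ^ j) y)},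
        D z ∈ Submodule.span F
          {z | ∃ i j : ℕ, i + j = n + 1 ∧ z = br ((D ^ i) x) ((D ^ j) y)} := by
      intro z hz
      induction hz using Submodule.span_induction with
      | mem w hw =>
        obtain ⟨i, j, hij, rfl⟩ := hw
        rw [hD]
        refine add_mem (Submodule.subset_span ⟨i + 1, j, by omega, ?_⟩)
          (Submodule.subset_span ⟨i, j + 1, by omega, ?_⟩)
        · rw [pow_succ']; rfl
        · rw [pow_succ' D j]; rfl
      | zero => simp
      | add u v _ _ hu hv => rw [map_add]; exact add_mem hu hv
      | smul t u _ hu => rw [map_smul]; exact Submodule.smul_mem _ t hu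
    have heq : (D ^ (n + 1)) (br x y) = D ((D ^ n) (br x y)) := by
      rw [pow_succ']; rfl
    rw [heq]
    exact hstep _ ih

private lemma deriv_pow_zero {F L : Type*} [Field F] [AddCommGroup L] [Module F L]
    (br : L →ₗ[F] L →ₗ[F] L) (D : Module.End F L)
    (hD : ∀ u v : L, D (br u v) = br (D u) v + br u (D v)) (x y : L) (p q : ℕ)
    (hx : (D ^ p) x = 0) (hy : (D ^ q) y = 0) : (D ^ (p + q)) (br x y) = 0 := by
  have h := deriv_pow_mem br D hD x y (p + q)
  have hsub : {z | ∃ i j : ℕ, i + j = p + q ∧ z = br ((D ^ i) x) ((D ^ j) y)} ⊆ {(0 : L)} := by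
    rintro z ⟨i, j, hij, rfl⟩
    rcases le_or_gt p i with h' | h'
    · have h0 : (D ^ i) x = 0 := Module.End.pow_map_zero_of_le h' hx
      simp [h0]
    · have h0 : (D ^ j) y = 0 := Module.End.pow_map_zero_of_le (by omega : q ≤ j) hy
      simp [h0]
  have hle : Submodule.span F
      {z | ∃ i j : ℕ, i + j = p + q ∧ z = br ((D ^ i) x) ((D ^ j) y)} ≤ ⊥ :=
    Submodule.span_le.mpr fun z hz => by
      rw [SetLike.mem_coe, Submodule.mem_bot]; exact hsub hz
  exact (Submodule.mem_bot F).mp (hle h)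

/-- Lemma 2.1: If `L` is a finite-dimensional non-abelian left Leibniz
algebra and `A` is an abelian subalgebra of codimension `k > 1` which is a maximal
subalgebra, then there is a proper subspace `L₁` with `L = A ⊕ L₁` and `[A, L₁] = L₁`. -/
theorem fitting_decomposition_of_maximal_abelian {F L : Type*} [Field F] [AddCommGroup L]
    [Module F L] [FiniteDimensional F L] (br : L →ₗ[F] L →ₗ[F] L)
    (leib : ∀ x y z : L, br x (br y z) = br (br x y) z + br y (br x z))
    (hnonab : ∃ x y : L, br x y ≠ 0)
    (A : Submodule F L)
    (habelian : ∀ a ∈ A, ∀ b ∈ A, br a b = 0)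
    (hproper : A ≠ ⊤)
    (hmax : ∀ S : Submodule F L, (∀ x ∈ S, ∀ y ∈ S, br x y ∈ S) → A ≤ S → S = A ∨ S = ⊤)
    (k : ℕ) (hk : 1 < k) (hcodim : Module.finrank F (L ⧸ A) = k) :
    ∃ L₁ : Submodule F L, L₁ ≠ ⊤ ∧ A ⊓ L₁ = ⊥ ∧ A ⊔ L₁ = ⊤ ∧ brSpan br A L₁ = L₁ := by
  classical
  -- A carries the trivial (abelian) Lie algebra structure, acting on `L` via `br`.
  letI : LieRing ↥A :=
    { (inferInstance : AddCommGroup ↥A) with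
      bracket := fun _ _ => 0
      add_lie := by intros; simp
      lie_add := by intros; simp
      lie_self := by intros; rfl
      leibniz_lie := by intros; simp }
  letI : LieAlgebra F ↥A :=
    { (inferInstance : Module F ↥A) with
      lie_smul := by intros; show (0:↥A) = _ • (0:↥A); simp }
  letI : LieRingModule ↥A L :=
    { bracket := fun a m => br a.1 m
      add_lie := by intro x y m; show br (x.1 + y.1) m = br x.1 m + br y.1 m; simp
      lie_add := by intro x m n; show br x.1 (m + n) = br x.1 m + br x.1 n; simp
      leibniz_lie := by
        intro x y m
        show br x.1 (br y.1 m) = br (0:↥A).1 m + br y.1 (br x.1 m)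
        rw [leib x.1 y.1 m, habelian x.1 x.2 y.1 y.2]
        simp }
  letI : LieModule F ↥A L :=
    { smul_lie := by intro t x m; show br (t • x.1) m = t • br x.1 m; simp
      lie_smul := by intro t x m; show br x.1 (t • m) = t • br x.1 m; simp }
  haveI : LieModule.IsTrivial ↥A ↥A := ⟨fun _ _ => rfl⟩
  haveI : LieRing.IsNilpotent ↥A := inferInstance
  have hbr_toEnd : ∀ (a : ↥A) (m : L), (toEnd F ↥A L a) m = br a.1 m := fun _ _ => rfl
  have hmem : ∀ m : L, m ∈ (genWeightSpace L (0 : ↥A → F) : Submodule F L) ↔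
      ∀ a : ↥A, ∃ n : ℕ, ((toEnd F ↥A L a) ^ n) m = 0 := by
    intro m
    rw [LieSubmodule.mem_toSubmodule, mem_genWeightSpace]
    simp
  -- `A` is contained in the zero weight space.
  have hA_le : A ≤ (genWeightSpace L (0 : ↥A → F) : Submodule F L) := by
    intro m hm
    rw [hmem]
    intro a
    exact ⟨1, by simp [hbr_toEnd, habelian a.1 a.2 m hm]⟩
  -- the zero weight space is a subalgebra
  have hL0_closed : ∀ x ∈ (genWeightSpace L (0 : ↥A → F) : Submodule F L),
      ∀ y ∈ (genWeightSpace L (0 : ↥A → F) : Submodule F L),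
      br x y ∈ (genWeightSpace L (0 : ↥A → F) : Submodule F L) := by
    intro x hx y hy
    rw [hmem] at hx hy ⊢
    intro a
    obtain ⟨p, hp⟩ := hx a
    obtain ⟨q, hq⟩ := hy a
    exact ⟨p + q, deriv_pow_zero br (toEnd F ↥A L a)
      (fun u v => leib a.1 u v) x y p q hp hq⟩
  rcases hmax _ hL0_closed hA_le with hS | hS
  · -- the zero weight space is `A`: the positive Fitting component works.
    have hcompl := LieModule.isCompl_genWeightSpace_zero_posFittingComp F ↥A L
    refine ⟨(posFittingComp F ↥A L : Submodule F L), ?_, ?_, ?_, ?_⟩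
    · -- proper
      intro htop
      have hdisj := hcompl.disjoint
      rw [← LieSubmodule.disjoint_toSubmodule, hS, htop, disjoint_top] at hdisj
      -- `A = ⊥`, hence the zero weight space is everything, hence `L = 0`.
      obtain ⟨x, y, hxy⟩ := hnonab
      have hx0 : x ∈ (genWeightSpace L (0 : ↥A → F) : Submodule F L) := by
        rw [hmem]
        intro a
        refine ⟨1, ?_⟩
        have ha : a.1 = 0 := (Submodule.eq_bot_iff A).mp hdisj a.1 a.2
        simp [hbr_toEnd, ha]
      rw [hS, hdisj] at hx0
      apply hxy
      simp [(Submodule.mem_bot F).mp hx0]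
    · have hdisj := hcompl.disjoint
      rw [← LieSubmodule.disjoint_toSubmodule, hS] at hdisj
      exact hdisj.eq_bot
    · have hcodisj := hcompl.codisjoint
      rw [← LieSubmodule.codisjoint_toSubmodule, hS] at hcodisj
      exact hcodisj.eq_top
    · -- `[A, L₁] = L₁`
      have hlie : ⁅(⊤ : LieIdeal F ↥A), posFittingComp F ↥A L⁆ = posFittingComp F ↥A L := by
        obtain ⟨l, hl⟩ := Filter.eventually_atTop.mp
          (LieModule.eventually_iInf_lowerCentralSeries_eq F ↥A L)
        have h1 : posFittingComp F ↥A L = lowerCentralSeries F ↥A L l := by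
          rw [← LieModule.iInf_lowerCentralSeries_eq_posFittingComp]; exact hl l le_rfl
        have h2 : posFittingComp F ↥A L = lowerCentralSeries F ↥A L (l + 1) := by
          rw [← LieModule.iInf_lowerCentralSeries_eq_posFittingComp]
          exact hl (l + 1) (Nat.le_succ l)
        calc ⁅(⊤ : LieIdeal F ↥A), posFittingComp F ↥A L⁆
            = ⁅(⊤ : LieIdeal F ↥A), lowerCentralSeries F ↥A L l⁆ := by rw [← h1]
          _ = lowerCentralSeries F ↥A L (l + 1) := (LieModule.lowerCentralSeries_succ F ↥A L l).symm
          _ = posFittingComp F ↥A L := h2.symm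
      have hset : {z | ∃ a ∈ A, ∃ b ∈ (posFittingComp F ↥A L : Submodule F L), z = br a b} =
          {m | ∃ x ∈ (⊤ : LieIdeal F ↥A), ∃ n ∈ posFittingComp F ↥A L, ⁅x, n⁆ = m} := by
        ext z
        constructor
        · rintro ⟨a, ha, b, hb, rfl⟩
          exact ⟨⟨a, ha⟩, trivial, b, hb, rfl⟩
        · rintro ⟨x, -, n, hn, rfl⟩
          exact ⟨x.1, x.2, n, hn, rfl⟩
      rw [brSpan, hset, ← LieSubmodule.lieIdeal_oper_eq_linear_span', hlie]
  · -- the zero weight space is everything: derive a contradiction.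
    exfalso
    have htopLie : genWeightSpace L (0 : ↥A → F) = ⊤ := by
      rw [← LieSubmodule.toSubmodule_inj, hS, LieSubmodule.top_toSubmodule]
    haveI : LieModule.IsNilpotent ↥A L := by
      rw [← LieModule.isNilpotent_of_top_iff' (R := F), ← htopLie]; infer_instance
    -- `A` as a Lie submodule of `L`.
    set NA : LieSubmodule F ↥A L :=
      { A with
        lie_mem := fun {a m} hm => by
          change br a.1 m ∈ A
          rw [habelian a.1 a.2 m hm]
          exact A.zero_mem } with hNA
    haveI : LieModule.IsNilpotent ↥A (L ⧸ NA) := by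
      obtain ⟨n, hn⟩ := (LieModule.isNilpotent_iff F ↥A L).mp (inferInstance : LieModule.IsNilpotent ↥A L)
      exact (LieModule.isNilpotent_quotient_iff F ↥A L NA).mpr ⟨n, hn ▸ bot_le⟩
    obtain ⟨w, hwA⟩ : ∃ w : L, w ∉ A := by
      by_contra h
      push_neg at h
      exact hproper (Submodule.eq_top_iff'.mpr h)
    haveI : Nontrivial (L ⧸ NA) := by
      refine ⟨LieSubmodule.Quotient.mk (N := NA) w, 0, ?_⟩
      rw [Ne, LieSubmodule.Quotient.mk_eq_zero']
      exact hwA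
    haveI := LieModule.nontrivial_max_triv_of_isNilpotent F ↥A (L ⧸ NA)
    obtain ⟨⟨v, hv⟩, hvne⟩ := exists_ne (0 : LieModule.maxTrivSubmodule F ↥A (L ⧸ NA))
    rw [LieModule.mem_maxTrivSubmodule] at hv
    have hv0 : v ≠ 0 := fun h => hvne (Subtype.ext h)
    -- the operators induced by right multiplication
    have hmapsto : ∀ b : ↥A, A ≤ A.comap (br.flip b.1) := by
      intro b a ha
      simp only [Submodule.mem_comap, LinearMap.flip_apply]
      rw [habelian a ha b.1 b.2]
      exact A.zero_mem
    let τ : ↥A → (L ⧸ NA) →ₗ[F] (L ⧸ NA) := fun b => Submodule.mapQ A A (br.flip b.1) (hmapsto b)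
    have hτ_mk : ∀ (b : ↥A) (x : L),
        τ b (LieSubmodule.Quotient.mk (N := NA) x) =
          LieSubmodule.Quotient.mk (N := NA) (br x b.1) :=
      fun b x => rfl
    have hlie_mk : ∀ (a : ↥A) (x : L),
        ⁅a, LieSubmodule.Quotient.mk (N := NA) x⁆ =
          LieSubmodule.Quotient.mk (N := NA) (br a.1 x) := fun a x => rfl
    have hsurj : Function.Surjective (LieSubmodule.Quotient.mk (N := NA)) :=
      Submodule.Quotient.mk_surjective _
    -- commutation : ⁅a, τ b w⁆ = τ b ⁅a, w⁆
    have hcomm : ∀ (a b : ↥A) (u : L ⧸ NA), ⁅a, τ b u⁆ = τ b ⁅a, u⁆ := by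
      intro a b u
      obtain ⟨x, rfl⟩ := hsurj u
      rw [hτ_mk, hlie_mk, hlie_mk, hτ_mk]
      congr 1
      have h := leib a.1 x b.1
      rw [habelian a.1 a.2 b.1 b.2] at h
      simp only [map_zero] at h
      rw [h]
      simp
    -- τ b (τ a u) = -⁅a, τ b u⁆
    have hright : ∀ (a b : ↥A) (u : L ⧸ NA), τ b (τ a u) = -⁅a, τ b u⁆ := by
      intro a b u
      obtain ⟨x, rfl⟩ := hsurj u
      rw [hτ_mk, hτ_mk, hτ_mk, hlie_mk]
      have h := leib x a.1 b.1
      rw [habelian a.1 a.2 b.1 b.2, map_zero] at h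
      have h2 : br (br x a.1) b.1 = -(br a.1 (br x b.1)) := eq_neg_of_add_eq_zero_left h.symm
      rw [h2]
      exact Submodule.Quotient.mk_neg _
    -- find a common kernel vector
    have hWinv : ∀ (b : ↥A) (u : L ⧸ NA), (∀ a : ↥A, ⁅a, u⁆ = 0) →
        ∀ a : ↥A, ⁅a, τ b u⁆ = 0 := by
      intro b u hu a
      rw [hcomm, hu a, map_zero]
    obtain ⟨xbar, hxne, hxL, hxR⟩ : ∃ xbar : L ⧸ NA, xbar ≠ 0 ∧
        (∀ a : ↥A, ⁅a, xbar⁆ = 0) ∧ (∀ a : ↥A, τ a xbar = 0) := by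
      by_cases hcase : ∀ a : ↥A, τ a v = 0
      · exact ⟨v, hv0, hv, hcase⟩
      · push_neg at hcase
        obtain ⟨a, ha⟩ := hcase
        refine ⟨τ a v, ha, hWinv a v hv, ?_⟩
        intro b
        rw [hright a b v, hWinv b v hv a, neg_zero]
    obtain ⟨x, rfl⟩ := hsurj xbar
    have hxA : x ∉ A := by
      intro h
      exact hxne (by rwa [LieSubmodule.Quotient.mk_eq_zero'])
    have hxl : ∀ a ∈ A, br a x ∈ A := by
      intro a ha
      have := hxL ⟨a, ha⟩
      rw [hlie_mk, LieSubmodule.Quotient.mk_eq_zero'] at this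
      exact this
    have hxr : ∀ a ∈ A, br x a ∈ A := by
      intro a ha
      have := hxR ⟨a, ha⟩
      rw [hτ_mk, LieSubmodule.Quotient.mk_eq_zero'] at this
      exact this
    -- the idealizer of A
    let N : Submodule F L :=
      { carrier := {z | (∀ a ∈ A, br a z ∈ A) ∧ (∀ a ∈ A, br z a ∈ A)}
        add_mem' := by
          rintro y z ⟨hy1, hy2⟩ ⟨hz1, hz2⟩
          constructor
          · intro a ha; rw [map_add]; exact A.add_mem (hy1 a ha) (hz1 a ha)
          · intro a ha
            rw [map_add, LinearMap.add_apply]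
            exact A.add_mem (hy2 a ha) (hz2 a ha)
        zero_mem' := by
          constructor
          · intro a ha; rw [map_zero]; exact A.zero_mem
          · intro a ha; rw [map_zero, LinearMap.zero_apply]; exact A.zero_mem
        smul_mem' := by
          rintro t z ⟨hz1, hz2⟩
          constructor
          · intro a ha; rw [map_smul]; exact A.smul_mem t (hz1 a ha)
          · intro a ha
            rw [map_smul, LinearMap.smul_apply]
            exact A.smul_mem t (hz2 a ha) }
    have hAN : A ≤ N := by
      intro a ha
      constructor
      · intro b hb; rw [habelian b hb a ha]; exact A.zero_mem
      · intro b hb; rw [habelian a ha b hb]; exact A.zero_mem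
    have hNclosed : ∀ y ∈ N, ∀ z ∈ N, br y z ∈ N := by
      rintro y ⟨hy1, hy2⟩ z ⟨hz1, hz2⟩
      constructor
      · intro a ha
        -- br a (br y z) = br (br a y) z + br y (br a z)
        rw [leib a y z]
        exact A.add_mem (hz1 _ (hy1 a ha)) (hy2 _ (hz1 a ha))
      · intro a ha
        -- br (br y z) a = br y (br z a) - br z (br y a)
        have h := leib y z a
        have : br (br y z) a = br y (br z a) - br z (br y a) := by rw [h]; abel
        rw [this]
        exact A.sub_mem (hy2 _ (hz2 a ha)) (hz2 _ (hy2 a ha))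
    have hNT : N = ⊤ := by
      rcases hmax N hNclosed hAN with h | h
      · exact absurd (h ▸ ⟨hxl, hxr⟩ : x ∈ A) hxA
      · exact h
    have hideal_l : ∀ a ∈ A, ∀ z : L, br a z ∈ A := by
      intro a ha z
      have hz : z ∈ N := hNT ▸ Submodule.mem_top
      exact hz.1 a ha
    have hideal_r : ∀ a ∈ A, ∀ z : L, br z a ∈ A := by
      intro a ha z
      have hz : z ∈ N := hNT ▸ Submodule.mem_top
      exact hz.2 a ha
    -- find `u ∉ A` with `br u u ∈ A`
    obtain ⟨u, huA, husq⟩ : ∃ u : L, u ∉ A ∧ br u u ∈ A := by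
      by_cases hsq : ∃ z : L, br z z ∉ A
      · obtain ⟨z, hz⟩ := hsq
        refine ⟨br z z, hz, ?_⟩
        have h0 : br (br z z) (br z z) = 0 := right_eq_add.mp (leib z z (br z z))
        rw [h0]
        exact A.zero_mem
      · push_neg at hsq
        exact ⟨w, hwA, hsq w⟩
    -- `A + F u` is a subalgebra strictly between `A` and `L`: contradiction.
    set B : Submodule F L := A ⊔ Submodule.span F {u} with hB
    have hABle : A ≤ B := le_sup_left
    have hBclosed : ∀ x' ∈ B, ∀ y' ∈ B, br x' y' ∈ B := by
      intro x' hx' y' hy'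
      rw [hB, Submodule.mem_sup] at hx' hy'
      obtain ⟨a, ha, s, hs, rfl⟩ := hx'
      obtain ⟨a', ha', s', hs', rfl⟩ := hy'
      obtain ⟨c, rfl⟩ := Submodule.mem_span_singleton.mp hs
      obtain ⟨c', rfl⟩ := Submodule.mem_span_singleton.mp hs'
      apply Submodule.mem_sup_left
      have hexp : br (a + c • u) (a' + c' • u) =
          br a a' + (c • br u a' + (c' • br a u + c' • c • br u u)) := by
        simp only [map_add, map_smul, LinearMap.add_apply, LinearMap.smul_apply, smul_add]
        abel
      rw [hexp, habelian a ha a' ha', zero_add]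
      exact A.add_mem (A.smul_mem _ (hideal_r a' ha' u))
        (A.add_mem (A.smul_mem _ (hideal_l a ha u)) (A.smul_mem _ (A.smul_mem _ husq)))
    rcases hmax B hBclosed hABle with hBA | hBT
    · exact huA (hBA ▸ Submodule.mem_sup_right (Submodule.mem_span_singleton_self u))
    · -- then `L = A + F u`, so the codimension of `A` is at most 1, contradiction.
      have hmap : Submodule.map A.mkQ B = ⊤ := by
        rw [hBT, Submodule.map_top, Submodule.range_mkQ]
      rw [hB, Submodule.map_sup, Submodule.map_span, Set.image_singleton] at hmap
      have hAbot : Submodule.map A.mkQ A = ⊥ := by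
        rw [eq_bot_iff, Submodule.map_le_iff_le_comap]
        intro z hz
        simp only [Submodule.mem_comap, Submodule.mkQ_apply, Submodule.mem_bot,
          Submodule.Quotient.mk_eq_zero]
        exact hz
      rw [hAbot, bot_sup_eq] at hmap
      have hne0 : A.mkQ u ≠ 0 := by
        rw [Submodule.mkQ_apply, Ne, Submodule.Quotient.mk_eq_zero]
        exact huA
      have h1 : Module.finrank F (L ⧸ A) = 1 := by
        rw [← finrank_top F (L ⧸ A), ← hmap, finrank_span_singleton hne0]
      omega
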